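/- A pair (a,c) with a < c is a tree-ascent of an s-decreasing tree T if and only if: (i) card(d,c) = card(d,a) for all d > c; (ii) card(c,a) < s(c); (iii) for all b with a < b < c, card(c,b) = card(c,a) implies card(b,a) = s(b); (iv) if s(a) > 0, then for all a' < a, card(a,a') = s(a) implies card(c,a') > card(c,a). -/

import Mathlib

/-- Planar rooted trees: leaves are unlabeled; internal nodes carry a natural
number label and an ordered list of children. -/
inductive STree : Type where
  | leaf : STree
  | node : ℕ → List STree → STree

namespace STree

mutual
  /-- `x` occurs as the label of an internal node of the tree. -/
  def mem (x : ℕ) : STree → Bool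
    | .leaf => false
    | .node a cs => x == a || memL x cs
  def memL (x : ℕ) : List STree → Bool
    | [] => false
    | t :: ts => mem x t || memL x ts
end

mutual
  /-- The list of internal node labels, in preorder. -/
  def labels : STree → List ℕ
    | .leaf => []
    | .node a cs => a :: labelsL cs
  def labelsL : List STree → List ℕ
    | [] => []
    | t :: ts => labels t ++ labelsL ts
end

mutual
  /-- Local well-formedness for the signature `s` : an internal node labeled `a`
  has `s a + 1` children, and all labels below it are smaller than `a`. -/
  def wf (s : ℕ → ℕ) : STree → Prop
    | .leaf => True
    | .node a cs => cs.length = s a + 1 ∧ (∀ b ∈ labelsL cs, b < a) ∧ wfL s cs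
  def wfL (s : ℕ → ℕ) : List STree → Prop
    | [] => True
    | t :: ts => wf s t ∧ wfL s ts
end

/-- `T` is an `s`-decreasing tree: its internal nodes are labeled bijectively by
`1, …, n`, node `i` has `s i + 1` ordered children, and all descendants of a node
have smaller labels. -/
def IsSDecreasingTree (n : ℕ) (s : ℕ → ℕ) (T : STree) : Prop :=
  wf s T ∧ (labels T).Perm (List.range' 1 n)

/-- Index of the first tree of the list containing the label `x`. -/
def idxOf (x : ℕ) : List STree → ℕ
  | [] => 0
  | t :: ts => if mem x t then 0 else idxOf x ts + 1

mutual
  /-- The cardinality `card_T(y,x)` of the pair `(y,x)` in the tree: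
  `0` if `x` is (weakly) left of `y`, `i` if `x` lies in the `i`-th child
  subtree of `y`, and `s y` if `x` is right of `y`. -/
  def card (s : ℕ → ℕ) (y x : ℕ) : STree → ℕ
    | .leaf => 0
    | .node a cs => if a = y then idxOf x cs else cardL s y x cs
  def cardL (s : ℕ → ℕ) (y x : ℕ) : List STree → ℕ
    | [] => 0
    | t :: ts =>
      if mem y t then
        (if mem x t then card s y x t else if memL x ts then s y else 0)
      else (if mem x t then 0 else cardL s y x ts)
end

/-- The tree-inversion multiset of `T`, as a multiplicity function on pairs
`(y,x)` with `1 ≤ x < y ≤ n`. -/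
def treeInv (n : ℕ) (s : ℕ → ℕ) (T : STree) : ℕ → ℕ → ℕ := fun y x =>
  if 1 ≤ x ∧ x < y ∧ y ≤ n then card s y x T else 0

/-- A multi inversion set on `1, …, n` bounded by the weak composition `s`. -/
def IsMultiInvSet (n : ℕ) (s : ℕ → ℕ) (I : ℕ → ℕ → ℕ) : Prop :=
  (∀ y x, I y x ≤ s y) ∧ ∀ y x, ¬(1 ≤ x ∧ x < y ∧ y ≤ n) → I y x = 0

/-- Transitivity: for `a < b < c`, `card(c,b) = i` implies `card(b,a) = 0` or
`card(c,a) ≥ i`. -/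
def InvTransitive (I : ℕ → ℕ → ℕ) : Prop :=
  ∀ a b c : ℕ, a < b → b < c → I b a = 0 ∨ I c b ≤ I c a

/-- Planarity: for `a < b < c`, `card(c,a) = i` implies `card(b,a) = s b` or
`card(c,b) ≥ i`. -/
def InvPlanar (s : ℕ → ℕ) (I : ℕ → ℕ → ℕ) : Prop :=
  ∀ a b c : ℕ, a < b → b < c → I b a = s b ∨ I c a ≤ I c b

/-- An `s`-tree-inversion set: a bounded multi inversion set that is transitive
and planar. -/
def IsTreeInvSet (n : ℕ) (s : ℕ → ℕ) (I : ℕ → ℕ → ℕ) : Prop :=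
  IsMultiInvSet n s I ∧ InvTransitive I ∧ InvPlanar s I

/-- Inclusion of multi inversion sets: pointwise comparison of multiplicities. -/
def invLE (I J : ℕ → ℕ → ℕ) : Prop := ∀ y x, I y x ≤ J y x

/-- The `s`-weak order: inclusion of tree-inversion multisets. -/
def sWeakLE (n : ℕ) (s : ℕ → ℕ) (T R : STree) : Prop :=
  invLE (treeInv n s T) (treeInv n s R)

/-- Union of multi inversion sets: pointwise maximum. -/
def invUnion (I J : ℕ → ℕ → ℕ) : ℕ → ℕ → ℕ := fun y x => max (I y x) (J y x)

/-- Transitive closure: `tc I (c,a)` is the maximal value of `I (b₁, b₂)` over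
all transitivity paths `c = b₁ > b₂ > … > b_k = a` (consecutive entries have
positive multiplicity). -/
noncomputable def tc (I : ℕ → ℕ → ℕ) : ℕ → ℕ → ℕ := fun c a =>
  sSup {v | ∃ (b : ℕ) (l : List ℕ),
    List.Chain (fun u w => w < u ∧ 0 < I u w) c (b :: l) ∧
    (b :: l).getLast (List.cons_ne_nil b l) = a ∧ v = I c b}

/-- Adding the inversion `(c,a)`: increase its multiplicity by one. -/
def addInv (I : ℕ → ℕ → ℕ) (c a : ℕ) : ℕ → ℕ → ℕ := fun y x =>
  if y = c ∧ x = a then I y x + 1 else I y x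

mutual
  /-- `a` is a (proper) descendant of the node labeled `c`. -/
  def descIn (c a : ℕ) : STree → Bool
    | .leaf => false
    | .node b cs => (b == c && memL a cs) || descInL c a cs
  def descInL (c a : ℕ) : List STree → Bool
    | [] => false
    | t :: ts => descIn c a t || descInL c a ts
end

mutual
  /-- `a` belongs to the rightmost child subtree of the node labeled `c`. -/
  def inRight (c a : ℕ) : STree → Bool
    | .leaf => false
    | .node b cs =>
      (b == c && (match cs.getLast? with
        | some t => mem a t
        | none => false)) || inRightL c a cs
  def inRightL (c a : ℕ) : List STree → Bool
    | [] => false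
    | t :: ts => inRight c a t || inRightL c a ts
end

mutual
  /-- `a` belongs to the leftmost child subtree of the node labeled `c`. -/
  def inLeft (c a : ℕ) : STree → Bool
    | .leaf => false
    | .node b cs =>
      (b == c && (match cs.head? with
        | some t => mem a t
        | none => false)) || inLeftL c a cs
  def inLeftL (c a : ℕ) : List STree → Bool
    | [] => false
    | t :: ts => inLeft c a t || inLeftL c a ts
end

mutual
  /-- The rightmost child subtree of the node labeled `a` is empty (a leaf). -/
  def rightEmpty (a : ℕ) : STree → Bool
    | .leaf => false
    | .node b cs =>
      (b == a && (match cs.getLast? with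
        | some .leaf => true
        | _ => false)) || rightEmptyL a cs
  def rightEmptyL (a : ℕ) : List STree → Bool
    | [] => false
    | t :: ts => rightEmpty a t || rightEmptyL a ts
end

/-- `(a,c)` is a tree-ascent of `T`: `a` is a descendant of `c`, not in the
rightmost subtree of `c`; `a` lies in the rightmost subtree of any `b` with
`a < b < c` having `a` as a descendant; and if `s a > 0` the rightmost
(strict right) subtree of `a` is empty. -/
def IsTreeAscent (s : ℕ → ℕ) (T : STree) (a c : ℕ) : Prop :=
  a < c ∧ descIn c a T = true ∧ inRight c a T = false ∧
  (∀ b : ℕ, a < b → b < c → descIn b a T = true → inRight b a T = true) ∧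
  (0 < s a → rightEmpty a T = true)

/-- `a` is the root label of the tree. -/
def hasRoot (a : ℕ) : STree → Bool
  | .leaf => false
  | .node b _ => a == b

mutual
  /-- `a` is a direct child of the node `c`, but not its rightmost child. -/
  def nonRightChild (c a : ℕ) : STree → Bool
    | .leaf => false
    | .node b cs => (b == c && cs.dropLast.any (hasRoot a)) || nonRightChildL c a cs
  def nonRightChildL (c a : ℕ) : List STree → Bool
    | [] => false
    | t :: ts => nonRightChild c a t || nonRightChildL c a ts
end

/-- `(a,c)` is a Tamari-ascent of `T`: `a` is a non-right child of `c`. -/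
def IsTamariAscent (T : STree) (a c : ℕ) : Prop :=
  a < c ∧ nonRightChild c a T = true

mutual
  /-- Horizontal mirror image of a tree: the order of children is reversed at
  every internal node. -/
  def mirror : STree → STree
    | .leaf => .leaf
    | .node a cs => .node a (mirrorL cs)
  def mirrorL : List STree → List STree
    | [] => []
    | t :: ts => mirrorL ts ++ [mirror t]
end

/-- `T` is an `s`-Tamari tree: `card(c,a) ≤ card(c,b)` for all `a < b < c`. -/
def TamariProp (n : ℕ) (s : ℕ → ℕ) (T : STree) : Prop :=
  ∀ a b c : ℕ, a < b → b < c → treeInv n s T c a ≤ treeInv n s T c b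

/-- `T` is an `s`-maximal-Tamari tree: `card(b,a) = s b` implies
`card(c,a) = s c` for all `c > b`. -/
def MaxTamariProp (n : ℕ) (s : ℕ → ℕ) (T : STree) : Prop :=
  ∀ a b c : ℕ, 1 ≤ a → a < b → b < c → c ≤ n →
    treeInv n s T b a = s b → treeInv n s T c a = s c

/-- The projection `π↓` on inversion sets:
`card_Q(c,a) = min { card_T(c,b) : a ≤ b < c }`. -/
noncomputable def pidownInv (n : ℕ) (s : ℕ → ℕ) (T : STree) : ℕ → ℕ → ℕ :=
  fun c a => sInf {v | ∃ b : ℕ, a ≤ b ∧ b < c ∧ v = treeInv n s T c b}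

open scoped Classical in
/-- The projection `π↑` on inversion sets: `card_R(c,a) = s c` if there is
`a < b < c` with `card_T(b,a) = s b`, and `card_R(c,a) = card_T(c,a)` otherwise. -/
noncomputable def piupInv (n : ℕ) (s : ℕ → ℕ) (T : STree) : ℕ → ℕ → ℕ :=
  fun c a =>
    if 1 ≤ a ∧ a < c ∧ c ≤ n then
      if ∃ b : ℕ, a < b ∧ b < c ∧ treeInv n s T b a = s b then s c
      else treeInv n s T c a
    else 0

end STree
namespace STree

/-! ### Auxiliary lemmas -/

mutual
theorem mem_iff (x : ℕ) : ∀ t : STree, mem x t = true ↔ x ∈ labels t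
  | .leaf => by simp [mem, labels]
  | .node a cs => by
    simp [mem, labels, memL_iff x cs]
theorem memL_iff (x : ℕ) : ∀ cs : List STree, memL x cs = true ↔ x ∈ labelsL cs
  | [] => by simp [memL, labelsL]
  | t :: ts => by
    simp [memL, labelsL, memL_iff x ts, mem_iff x t]
end

mutual
theorem descIn_mem {c a : ℕ} : ∀ {t : STree}, descIn c a t = true →
    mem c t = true ∧ mem a t = true
  | .leaf, h => by simp [descIn] at h
  | .node b cs, h => by
    simp only [descIn, Bool.or_eq_true, Bool.and_eq_true, beq_iff_eq] at h
    rcases h with ⟨rfl, h2⟩ | h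
    · simp [mem, h2]
    · rcases descInL_mem h with ⟨h1, h2⟩
      simp [mem, h1, h2]
theorem descInL_mem {c a : ℕ} : ∀ {cs : List STree}, descInL c a cs = true →
    memL c cs = true ∧ memL a cs = true
  | [], h => by simp [descInL] at h
  | t :: ts, h => by
    simp only [descInL, Bool.or_eq_true] at h
    rcases h with h | h
    · rcases descIn_mem h with ⟨h1, h2⟩
      simp [memL, h1, h2]
    · rcases descInL_mem h with ⟨h1, h2⟩
      simp [memL, h1, h2]
end

mutual
theorem inRight_mem {c a : ℕ} : ∀ {t : STree}, inRight c a t = true → mem c t = true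
  | .leaf, h => by simp [inRight] at h
  | .node b cs, h => by
    simp only [inRight, Bool.or_eq_true, Bool.and_eq_true, beq_iff_eq] at h
    rcases h with ⟨rfl, _⟩ | h
    · simp [mem]
    · simp [mem, inRightL_mem h]
theorem inRightL_mem {c a : ℕ} : ∀ {cs : List STree}, inRightL c a cs = true →
    memL c cs = true
  | [], h => by simp [inRightL] at h
  | t :: ts, h => by
    simp only [inRightL, Bool.or_eq_true] at h
    rcases h with h | h
    · simp [memL, inRight_mem h]
    · simp [memL, inRightL_mem h]
end

mutual
theorem rightEmpty_mem {a : ℕ} : ∀ {t : STree}, rightEmpty a t = true → mem a t = true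
  | .leaf, h => by simp [rightEmpty] at h
  | .node b cs, h => by
    simp only [rightEmpty, Bool.or_eq_true, Bool.and_eq_true, beq_iff_eq] at h
    rcases h with ⟨rfl, _⟩ | h
    · simp [mem]
    · simp [mem, rightEmptyL_mem h]
theorem rightEmptyL_mem {a : ℕ} : ∀ {cs : List STree}, rightEmptyL a cs = true →
    memL a cs = true
  | [], h => by simp [rightEmptyL] at h
  | t :: ts, h => by
    simp only [rightEmptyL, Bool.or_eq_true] at h
    rcases h with h | h
    · simp [memL, rightEmpty_mem h]
    · simp [memL, rightEmptyL_mem h]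
end

mutual
theorem descIn_lt {s : ℕ → ℕ} {c a : ℕ} : ∀ {t : STree}, wf s t → descIn c a t = true →
    a < c
  | .leaf, _, h => by simp [descIn] at h
  | .node b cs, hw, h => by
    simp only [descIn, Bool.or_eq_true, Bool.and_eq_true, beq_iff_eq] at h
    rcases hw with ⟨_, hlt, hwL⟩
    rcases h with ⟨rfl, h2⟩ | h
    · exact hlt a ((memL_iff a cs).1 h2)
    · exact descInL_lt hwL h
theorem descInL_lt {s : ℕ → ℕ} {c a : ℕ} : ∀ {cs : List STree}, wfL s cs →
    descInL c a cs = true → a < c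
  | [], _, h => by simp [descInL] at h
  | t :: ts, hw, h => by
    simp only [descInL, Bool.or_eq_true] at h
    rcases h with h | h
    · exact descIn_lt hw.1 h
    · exact descInL_lt hw.2 h
end

end STree
namespace STree

theorem disjL {t : STree} {ts : List STree} (h : (labelsL (t :: ts)).Nodup) {x : ℕ}
    (h1 : mem x t = true) (h2 : memL x ts = true) : False := by
  simp only [labelsL, List.nodup_append] at h
  exact h.2.2 _ ((mem_iff x t).1 h1) _ ((memL_iff x ts).1 h2) rfl

theorem nodup_of_cons_head {t : STree} {ts : List STree}
    (h : (labelsL (t :: ts)).Nodup) : (labels t).Nodup := by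
  simp only [labelsL, List.nodup_append] at h; exact h.1

theorem nodup_of_cons_tail {t : STree} {ts : List STree}
    (h : (labelsL (t :: ts)).Nodup) : (labelsL ts).Nodup := by
  simp only [labelsL, List.nodup_append] at h; exact h.2.1

theorem idxOf_cons (x : ℕ) (t : STree) (ts : List STree) :
    idxOf x (t :: ts) = if mem x t then 0 else idxOf x ts + 1 := rfl

theorem memL_split {x : ℕ} {t : STree} {ts : List STree} (h : memL x (t :: ts) = true) :
    mem x t = true ∨ memL x ts = true := by
  simpa only [memL, Bool.or_eq_true] using h

mutual
theorem card_not_mem {s : ℕ → ℕ} {d x : ℕ} : ∀ {t : STree}, mem d t = false →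
    card s d x t = 0
  | .leaf, _ => by simp [card]
  | .node b cs, h => by
    simp only [mem, Bool.or_eq_false_iff, beq_eq_false_iff_ne, ne_eq] at h
    rw [card, if_neg (fun hbd => h.1 hbd.symm)]
    exact cardL_not_mem h.2
theorem cardL_not_mem {s : ℕ → ℕ} {d x : ℕ} : ∀ {cs : List STree}, memL d cs = false →
    cardL s d x cs = 0
  | [], _ => by simp [cardL]
  | t :: ts, h => by
    simp only [memL, Bool.or_eq_false_iff] at h
    rw [cardL, if_neg (by simp [h.1])]
    split
    · rfl
    · exact cardL_not_mem h.2
end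

theorem mem_of_elem {x : ℕ} : ∀ {cs : List STree} {t : STree}, t ∈ cs →
    mem x t = true → memL x cs = true
  | t' :: ts, t, ht, hm => by
    rcases List.mem_cons.1 ht with rfl | ht
    · simp [memL, hm]
    · simp [memL, mem_of_elem ht hm]

theorem idxOf_lt_length {x : ℕ} : ∀ {cs : List STree}, memL x cs = true →
    idxOf x cs < cs.length
  | t :: ts, h => by
    by_cases hm : mem x t = true
    · simp [idxOf, hm]
    · rcases memL_split h with h' | h'
      · exact absurd h' hm
      · have := idxOf_lt_length h'
        simp only [idxOf, if_neg hm, List.length_cons]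
        omega

theorem idxOf_eq_of_descInL {y x : ℕ} : ∀ {cs : List STree}, (labelsL cs).Nodup →
    descInL y x cs = true → idxOf x cs = idxOf y cs
  | t :: ts, hnd, h => by
    simp only [descInL, Bool.or_eq_true] at h
    rcases h with h | h
    · rcases descIn_mem h with ⟨hy, hx⟩
      simp [idxOf, hx, hy]
    · rcases descInL_mem h with ⟨hy, hx⟩
      have hxt : mem x t = false := by
        by_contra hc
        exact disjL hnd (by simpa using hc) hx
      have hyt : mem y t = false := by
        by_contra hc
        exact disjL hnd (by simpa using hc) hy
      simp [idxOf, hxt, hyt, idxOf_eq_of_descInL (nodup_of_cons_tail hnd) h]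

theorem idxOf_last_iff {a : ℕ} : ∀ {cs : List STree} {t0 : STree},
    (labelsL cs).Nodup → cs.getLast? = some t0 → memL a cs = true →
    (idxOf a cs = cs.length - 1 ↔ mem a t0 = true)
  | [t], t0, _, hl, hm => by
    simp only [List.getLast?_singleton, Option.some.injEq] at hl
    subst hl
    rcases memL_split hm with h' | h'
    · simp [idxOf, h']
    · simp [memL] at h'
  | t :: t1 :: ts, t0, hnd, hl, hm => by
    rw [List.getLast?_cons_cons] at hl
    have ht0mem : t0 ∈ t1 :: ts := by
      have hne : (t1 :: ts) ≠ [] := by simp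
      rw [List.getLast?_eq_getLast hne, Option.some.injEq] at hl
      rw [← hl]
      exact List.getLast_mem hne
    by_cases hmt : mem a t = true
    · have hRHS : mem a t0 = false := by
        by_contra hc
        exact disjL hnd hmt (mem_of_elem ht0mem (by simpa using hc))
      simp [idxOf, hmt, hRHS]
    · rcases memL_split hm with h' | h'
      · exact absurd h' hmt
      · have hrec := idxOf_last_iff (nodup_of_cons_tail hnd) hl h'
        have hlt : idxOf a (t1 :: ts) < (t1 :: ts).length := idxOf_lt_length h'
        simp only [List.length_cons] at hrec hlt ⊢
        rw [idxOf_cons, if_neg hmt, ← hrec]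
        omega

end STree
namespace STree

theorem cardL_cons (s : ℕ → ℕ) (y x : ℕ) (t : STree) (ts : List STree) :
    cardL s y x (t :: ts) =
      if mem y t then
        (if mem x t then card s y x t else if memL x ts then s y else 0)
      else (if mem x t then 0 else cardL s y x ts) := rfl

theorem labels_node (b : ℕ) (cs : List STree) : labels (.node b cs) = b :: labelsL cs := rfl

mutual
theorem card_desc {s : ℕ → ℕ} {y x : ℕ} : ∀ {t : STree}, (labels t).Nodup → wf s t →
    descIn y x t = true → ∀ d, y < d → card s d x t = card s d y t
  | .leaf, _, _, h, _, _ => by simp [descIn] at h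
  | .node b cs, hnd, hw, h, d, hyd => by
    rw [labels_node] at hnd
    obtain ⟨hlen, hlt, hwL⟩ := hw
    have hndc : (labelsL cs).Nodup := hnd.of_cons
    simp only [descIn, Bool.or_eq_true, Bool.and_eq_true, beq_iff_eq] at h
    by_cases hbd : b = d
    · subst hbd
      rcases h with ⟨rfl, hm⟩ | h
      · omega
      · simp only [card, if_pos rfl]
        exact idxOf_eq_of_descInL hndc h
    · rcases h with ⟨rfl, hm⟩ | h
      · have hdm : memL d cs = false := by
          by_contra hc
          have : d ∈ labelsL cs := (memL_iff d cs).1 (by simpa using hc)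
          have := hlt d this
          omega
        simp only [card, if_neg hbd]
        rw [cardL_not_mem hdm, cardL_not_mem hdm]
      · simp only [card, if_neg hbd]
        exact cardL_desc hndc hwL h d hyd
theorem cardL_desc {s : ℕ → ℕ} {y x : ℕ} : ∀ {cs : List STree}, (labelsL cs).Nodup →
    wfL s cs → descInL y x cs = true → ∀ d, y < d → cardL s d x cs = cardL s d y cs
  | t :: ts, hnd, hw, h, d, hyd => by
    simp only [descInL, Bool.or_eq_true] at h
    rcases h with h | h
    · obtain ⟨hy, hx⟩ := descIn_mem h
      by_cases hdt : mem d t = true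
      · simp only [cardL_cons, hdt, hx, hy, if_true]
        exact card_desc (nodup_of_cons_head hnd) hw.1 h d hyd
      · have hdt' : mem d t = false := by simpa using hdt
        simp [cardL_cons, hdt', hx, hy]
    · obtain ⟨hy, hx⟩ := descInL_mem h
      have hxt : mem x t = false := by
        by_contra hc
        exact disjL hnd (by simpa using hc) hx
      have hyt : mem y t = false := by
        by_contra hc
        exact disjL hnd (by simpa using hc) hy
      by_cases hdt : mem d t = true
      · simp [cardL_cons, hdt, hxt, hyt, hx, hy]
      · have hdt' : mem d t = false := by simpa using hdt
        simp only [cardL_cons, hdt', hxt, hyt]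
        simp only [Bool.false_eq_true, if_false]
        exact cardL_desc (nodup_of_cons_tail hnd) hw.2 h d hyd
end

theorem inRightL_cons (c a : ℕ) (t : STree) (ts : List STree) :
    inRightL c a (t :: ts) = (inRight c a t || inRightL c a ts) := rfl

mutual
theorem card_right {s : ℕ → ℕ} {c a : ℕ} : ∀ {t : STree}, (labels t).Nodup → wf s t →
    descIn c a t = true →
    card s c a t ≤ s c ∧ (inRight c a t = true ↔ card s c a t = s c)
  | .node b cs, hnd, hw, h => by
    rw [labels_node] at hnd
    obtain ⟨hlen, hlt, hwL⟩ := hw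
    have hndc : (labelsL cs).Nodup := hnd.of_cons
    have hbn : b ∉ labelsL cs := (List.nodup_cons.1 hnd).1
    simp only [descIn, Bool.or_eq_true, Bool.and_eq_true, beq_iff_eq] at h
    rcases h with ⟨rfl, hm⟩ | h
    · -- root is the node c (named b here, with c := b)
      have hcs : cs ≠ [] := by
        intro h0
        rw [h0] at hlen
        simp at hlen
      have hl2 : cs.getLast? = some (cs.getLast hcs) := List.getLast?_eq_getLast hcs
      have hidx := idxOf_last_iff hndc hl2 hm
      have hlt2 : idxOf a cs < cs.length := idxOf_lt_length hm
      have hIRL : inRightL b a cs = false := by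
        by_contra hc
        exact hbn ((memL_iff b cs).1 (inRightL_mem (by simpa using hc)))
      have hcard : card s b a (.node b cs) = idxOf a cs := by
        simp [card]
      rw [hcard]
      constructor
      · omega
      · have hIR : inRight b a (.node b cs) = mem a (cs.getLast hcs) := by
          simp [inRight, hl2, hIRL]
        rw [hIR, ← hidx]
        omega
    · -- descInL c a cs
      have hbc : b ≠ c := by
        rintro rfl
        exact hbn ((memL_iff b cs).1 (descInL_mem h).1)
      have hcard : card s c a (.node b cs) = cardL s c a cs := by
        simp [card, hbc]
      have hIR : inRight c a (.node b cs) = inRightL c a cs := by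
        simp [inRight, hbc]
      rw [hcard, hIR]
      exact cardL_right hndc hwL h
theorem cardL_right {s : ℕ → ℕ} {c a : ℕ} : ∀ {cs : List STree}, (labelsL cs).Nodup →
    wfL s cs → descInL c a cs = true →
    cardL s c a cs ≤ s c ∧ (inRightL c a cs = true ↔ cardL s c a cs = s c)
  | t :: ts, hnd, hw, h => by
    simp only [descInL, Bool.or_eq_true] at h
    rcases h with h | h
    · obtain ⟨hc, ha⟩ := descIn_mem h
      have h2 : inRightL c a ts = false := by
        by_contra hcon
        exact disjL hnd hc (inRightL_mem (by simpa using hcon))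
      rw [cardL_cons, if_pos hc, if_pos ha, inRightL_cons, h2, Bool.or_false]
      exact card_right (nodup_of_cons_head hnd) hw.1 h
    · obtain ⟨hc, ha⟩ := descInL_mem h
      have hct : mem c t = false := by
        by_contra hcon
        exact disjL hnd (by simpa using hcon) hc
      have hat : mem a t = false := by
        by_contra hcon
        exact disjL hnd (by simpa using hcon) ha
      have h1 : inRight c a t = false := by
        by_contra hcon
        exact absurd (inRight_mem (by simpa using hcon)) (by simp [hct])
      rw [cardL_cons, if_neg (by simp [hct]), if_neg (by simp [hat]),
        inRightL_cons, h1, Bool.false_or]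
      exact cardL_right (nodup_of_cons_tail hnd) hw.2 h
end

end STree
namespace STree

mutual
theorem descIn_trans {z y x : ℕ} : ∀ {t : STree}, (labels t).Nodup →
    descIn z y t = true → descIn y x t = true → descIn z x t = true
  | .node b cs, hnd, h1, h2 => by
    rw [labels_node] at hnd
    have hbn : b ∉ labelsL cs := (List.nodup_cons.1 hnd).1
    simp only [descIn, Bool.or_eq_true, Bool.and_eq_true, beq_iff_eq] at h1 h2 ⊢
    rcases h1 with ⟨rfl, hm1⟩ | h1
    · rcases h2 with ⟨rfl, hm2⟩ | h2
      · exact Or.inl ⟨rfl, hm2⟩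
      · exact Or.inl ⟨rfl, (descInL_mem h2).2⟩
    · rcases h2 with ⟨rfl, hm2⟩ | h2
      · exact absurd ((memL_iff b cs).1 (descInL_mem h1).2) hbn
      · exact Or.inr (descInL_trans hnd.of_cons h1 h2)
theorem descInL_trans {z y x : ℕ} : ∀ {cs : List STree}, (labelsL cs).Nodup →
    descInL z y cs = true → descInL y x cs = true → descInL z x cs = true
  | t :: ts, hnd, h1, h2 => by
    simp only [descInL, Bool.or_eq_true] at h1 h2 ⊢
    rcases h1 with h1 | h1 <;> rcases h2 with h2 | h2
    · exact Or.inl (descIn_trans (nodup_of_cons_head hnd) h1 h2)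
    · exact absurd (disjL hnd (descIn_mem h1).2 (descInL_mem h2).1) not_false
    · exact absurd (disjL hnd (descIn_mem h2).1 (descInL_mem h1).2) not_false
    · exact Or.inr (descInL_trans (nodup_of_cons_tail hnd) h1 h2)
end

mutual
theorem descIn_path {p q x : ℕ} : ∀ {t : STree}, (labels t).Nodup →
    descIn p x t = true → descIn q x t = true →
    p = q ∨ descIn p q t = true ∨ descIn q p t = true
  | .node b cs, hnd, h1, h2 => by
    rw [labels_node] at hnd
    simp only [descIn, Bool.or_eq_true, Bool.and_eq_true, beq_iff_eq] at h1 h2 ⊢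
    rcases h1 with ⟨rfl, hm1⟩ | h1
    · rcases h2 with ⟨rfl, hm2⟩ | h2
      · exact Or.inl rfl
      · exact Or.inr (Or.inl (Or.inl ⟨rfl, (descInL_mem h2).1⟩))
    · rcases h2 with ⟨rfl, hm2⟩ | h2
      · exact Or.inr (Or.inr (Or.inl ⟨rfl, (descInL_mem h1).1⟩))
      · rcases descInL_path hnd.of_cons h1 h2 with h | h | h
        · exact Or.inl h
        · exact Or.inr (Or.inl (Or.inr h))
        · exact Or.inr (Or.inr (Or.inr h))
theorem descInL_path {p q x : ℕ} : ∀ {cs : List STree}, (labelsL cs).Nodup →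
    descInL p x cs = true → descInL q x cs = true →
    p = q ∨ descInL p q cs = true ∨ descInL q p cs = true
  | t :: ts, hnd, h1, h2 => by
    simp only [descInL, Bool.or_eq_true] at h1 h2 ⊢
    rcases h1 with h1 | h1 <;> rcases h2 with h2 | h2
    · rcases descIn_path (nodup_of_cons_head hnd) h1 h2 with h | h | h
      · exact Or.inl h
      · exact Or.inr (Or.inl (Or.inl h))
      · exact Or.inr (Or.inr (Or.inl h))
    · exact absurd (disjL hnd (descIn_mem h1).2 (descInL_mem h2).2) not_false
    · exact absurd (disjL hnd (descIn_mem h2).2 (descInL_mem h1).2) not_false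
    · rcases descInL_path (nodup_of_cons_tail hnd) h1 h2 with h | h | h
      · exact Or.inl h
      · exact Or.inr (Or.inl (Or.inr h))
      · exact Or.inr (Or.inr (Or.inr h))
end

mutual
theorem rightEmpty_notRight {a x : ℕ} : ∀ {t : STree}, (labels t).Nodup →
    rightEmpty a t = true → inRight a x t = false
  | .node b cs, hnd, h => by
    rw [labels_node] at hnd
    have hbn : b ∉ labelsL cs := (List.nodup_cons.1 hnd).1
    simp only [rightEmpty, Bool.or_eq_true, Bool.and_eq_true, beq_iff_eq] at h
    rcases h with ⟨rfl, hmatch⟩ | h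
    · -- b = a, rightmost child is a leaf
      have hIRL : inRightL b x cs = false := by
        by_contra hc
        exact hbn ((memL_iff b cs).1 (inRightL_mem (by simpa using hc)))
      cases hl : cs.getLast? with
      | none => rw [hl] at hmatch; simp at hmatch
      | some t0 =>
        cases t0 with
        | node r cs' => rw [hl] at hmatch; simp at hmatch
        | leaf =>
          simp [inRight, hl, hIRL, mem]
    · have hba : b ≠ a := by
        rintro rfl
        exact hbn ((memL_iff b cs).1 (rightEmptyL_mem h))
      have hIRL : inRightL a x cs = false := rightEmptyL_notRight hnd.of_cons h
      simp [inRight, hba, hIRL]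
theorem rightEmptyL_notRight {a x : ℕ} : ∀ {cs : List STree}, (labelsL cs).Nodup →
    rightEmptyL a cs = true → inRightL a x cs = false
  | t :: ts, hnd, h => by
    simp only [rightEmptyL, Bool.or_eq_true] at h
    rcases h with h | h
    · have h1 : inRight a x t = false := rightEmpty_notRight (nodup_of_cons_head hnd) h
      have h2 : inRightL a x ts = false := by
        by_contra hc
        exact disjL hnd (rightEmpty_mem h) (inRightL_mem (by simpa using hc))
      simp [inRightL_cons, h1, h2]
    · have h1 : inRight a x t = false := by
        by_contra hc
        exact disjL hnd (inRight_mem (by simpa using hc)) (rightEmptyL_mem h)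
      have h2 : inRightL a x ts = false := rightEmptyL_notRight (nodup_of_cons_tail hnd) h
      simp [inRightL_cons, h1, h2]
end

mutual
theorem exists_right {s : ℕ → ℕ} {a : ℕ} : ∀ {t : STree}, (labels t).Nodup → wf s t →
    mem a t = true → rightEmpty a t = false → 0 < s a →
    ∃ a', descIn a a' t = true ∧ inRight a a' t = true
  | .node b cs, hnd, hw, hm, hre, hs => by
    rw [labels_node] at hnd
    obtain ⟨hlen, hlt, hwL⟩ := hw
    simp only [rightEmpty, Bool.or_eq_false_iff, Bool.and_eq_false_iff] at hre
    by_cases hba : b = a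
    · subst hba
      have hcs : cs ≠ [] := by
        intro h0
        rw [h0] at hlen
        simp at hlen
      have hl2 : cs.getLast? = some (cs.getLast hcs) := List.getLast?_eq_getLast hcs
      have hmatch : (match cs.getLast? with
          | some .leaf => true
          | _ => false) = false := by
        rcases hre.1 with h | h
        · simp at h
        · exact h
      cases ht0 : cs.getLast hcs with
      | leaf => rw [hl2, ht0] at hmatch; simp at hmatch
      | node r cs' =>
        refine ⟨r, ?_, ?_⟩
        · have : mem r (cs.getLast hcs) = true := by simp [ht0, mem]
          have : memL r cs = true := mem_of_elem (List.getLast_mem hcs) this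
          simp [descIn, this]
        · have : mem r (cs.getLast hcs) = true := by simp [ht0, mem]
          simp [inRight, hl2, this]
    · have hmcs : memL a cs = true := by
        simp only [mem, Bool.or_eq_true, beq_iff_eq] at hm
        rcases hm with h | h
        · exact absurd h.symm hba
        · exact h
      have hreL : rightEmptyL a cs = false := hre.2
      obtain ⟨a', h1, h2⟩ := existsL_right hnd.of_cons hwL hmcs hreL hs
      refine ⟨a', ?_, ?_⟩
      · simp [descIn, h1]
      · simp [inRight, h2]
theorem existsL_right {s : ℕ → ℕ} {a : ℕ} : ∀ {cs : List STree}, (labelsL cs).Nodup →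
    wfL s cs → memL a cs = true → rightEmptyL a cs = false → 0 < s a →
    ∃ a', descInL a a' cs = true ∧ inRightL a a' cs = true
  | t :: ts, hnd, hw, hm, hre, hs => by
    simp only [rightEmptyL, Bool.or_eq_false_iff] at hre
    rcases memL_split hm with h | h
    · obtain ⟨a', h1, h2⟩ := exists_right (nodup_of_cons_head hnd) hw.1 h hre.1 hs
      exact ⟨a', by simp [descInL, h1], by simp [inRightL_cons, h2]⟩
    · obtain ⟨a', h1, h2⟩ := existsL_right (nodup_of_cons_tail hnd) hw.2 h hre.2 hs
      exact ⟨a', by simp [descInL, h1], by simp [inRightL_cons, h2]⟩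
end

end STree
namespace STree

theorem bool_ff {b : Bool} (h : b = false) (h' : b = true) : False := by
  rw [h] at h'; simp at h'

theorem descInL_cons (c a : ℕ) (t : STree) (ts : List STree) :
    descInL c a (t :: ts) = (descIn c a t || descInL c a ts) := rfl

theorem card_node (s : ℕ → ℕ) (y x b : ℕ) (cs : List STree) :
    card s y x (.node b cs) = if b = y then idxOf x cs else cardL s y x cs := rfl

theorem mem_node_split {x b : ℕ} {cs : List STree} (h : mem x (.node b cs) = true) :
    x = b ∨ memL x cs = true := by
  simpa only [mem, Bool.or_eq_true, beq_iff_eq] using h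

mutual
theorem master {s : ℕ → ℕ} {x y : ℕ} : ∀ {t : STree}, (labels t).Nodup → wf s t →
    mem x t = true → mem y t = true → x ≠ y →
    descIn y x t = false → descIn x y t = false →
    ∃ M, descIn M x t = true ∧ descIn M y t = true ∧
      card s M x t ≠ card s M y t ∧
      (card s M x t < card s M y t → card s y x t = 0 ∧ card s x y t = s x) ∧
      (card s M y t < card s M x t → card s x y t = 0 ∧ card s y x t = s y) ∧
      (∀ z, descIn z x t = true → descIn z y t = true → z = M ∨ descIn z M t = true)
  | .node b cs, hnd, hw, hmx, hmy, hxy, hyx, hxy2 => by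
    rw [labels_node] at hnd
    obtain ⟨hlen, hlt, hwL⟩ := hw
    have hndc : (labelsL cs).Nodup := hnd.of_cons
    have hbn : b ∉ labelsL cs := (List.nodup_cons.1 hnd).1
    rcases mem_node_split hmx with rfl | hxcs
    · -- x is the root: y is below x, contradiction
      rcases mem_node_split hmy with rfl | hycs
      · exact absurd rfl hxy
      · exact absurd (show descIn x y (.node x cs) = true by simp [descIn, hycs])
          (by simp [hxy2])
    · rcases mem_node_split hmy with rfl | hycs
      · exact absurd (show descIn y x (.node y cs) = true by simp [descIn, hxcs])
          (by simp [hyx])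
      · have hxb : x ≠ b := fun h => hbn (h ▸ (memL_iff x cs).1 hxcs)
        have hyb : y ≠ b := fun h => hbn (h ▸ (memL_iff y cs).1 hycs)
        have hdyx : descInL y x cs = false := by
          by_contra hc
          exact bool_ff hyx (by simp [descIn, show descInL y x cs = true by simpa using hc])
        have hdxy : descInL x y cs = false := by
          by_contra hc
          exact bool_ff hxy2 (by simp [descIn, show descInL x y cs = true by simpa using hc])
        have cardeq : ∀ u v : ℕ, u ≠ b → card s u v (.node b cs) = cardL s u v cs := by
          intro u v hu
          rw [card_node, if_neg (fun h => hu h.symm)]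
        have cardeq2 : ∀ v : ℕ, card s b v (.node b cs) = idxOf v cs := by
          intro v
          rw [card_node, if_pos rfl]
        rcases masterL hndc hwL hxcs hycs hxy hdyx hdxy with
          ⟨M, hMx, hMy, hne, hl1, hl2, hu⟩ | ⟨hne, hl1, hl2, hu⟩
        · have hMb : M ≠ b := fun h => hbn (h ▸ (memL_iff M cs).1 (descInL_mem hMx).1)
          refine ⟨M, by simp [descIn, hMx], by simp [descIn, hMy], ?_, ?_, ?_, ?_⟩
          · rw [cardeq _ _ hMb, cardeq _ _ hMb]; exact hne
          · rw [cardeq _ _ hMb, cardeq _ _ hMb, cardeq _ _ hyb, cardeq _ _ hxb]; exact hl1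
          · rw [cardeq _ _ hMb, cardeq _ _ hMb, cardeq _ _ hyb, cardeq _ _ hxb]; exact hl2
          · intro z hzx hzy
            simp only [descIn, Bool.or_eq_true, Bool.and_eq_true, beq_iff_eq] at hzx hzy
            rcases hzx with ⟨rfl, _⟩ | hzx
            · exact Or.inr (by simp [descIn, (descInL_mem hMx).1])
            · rcases hzy with ⟨rfl, _⟩ | hzy
              · exact Or.inr (by simp [descIn, (descInL_mem hMx).1])
              · rcases hu z hzx hzy with h | h
                · exact Or.inl h
                · exact Or.inr (by simp [descIn, h])
        · refine ⟨b, by simp [descIn, hxcs], by simp [descIn, hycs], ?_, ?_, ?_, ?_⟩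
          · rw [cardeq2, cardeq2]; exact hne
          · rw [cardeq2, cardeq2, cardeq _ _ hyb, cardeq _ _ hxb]; exact hl1
          · rw [cardeq2, cardeq2, cardeq _ _ hxb, cardeq _ _ hyb]; exact hl2
          · intro z hzx hzy
            simp only [descIn, Bool.or_eq_true, Bool.and_eq_true, beq_iff_eq] at hzx hzy
            rcases hzx with ⟨rfl, _⟩ | hzx
            · exact Or.inl rfl
            · rcases hzy with ⟨rfl, _⟩ | hzy
              · exact Or.inl rfl
              · exact absurd (hu z hzx hzy) (by simp)
theorem masterL {s : ℕ → ℕ} {x y : ℕ} : ∀ {cs : List STree}, (labelsL cs).Nodup →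
    wfL s cs → memL x cs = true → memL y cs = true → x ≠ y →
    descInL y x cs = false → descInL x y cs = false →
    (∃ M, descInL M x cs = true ∧ descInL M y cs = true ∧
      cardL s M x cs ≠ cardL s M y cs ∧
      (cardL s M x cs < cardL s M y cs → cardL s y x cs = 0 ∧ cardL s x y cs = s x) ∧
      (cardL s M y cs < cardL s M x cs → cardL s x y cs = 0 ∧ cardL s y x cs = s y) ∧
      (∀ z, descInL z x cs = true → descInL z y cs = true →
        z = M ∨ descInL z M cs = true))
    ∨ (idxOf x cs ≠ idxOf y cs ∧
      (idxOf x cs < idxOf y cs → cardL s y x cs = 0 ∧ cardL s x y cs = s x) ∧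
      (idxOf y cs < idxOf x cs → cardL s x y cs = 0 ∧ cardL s y x cs = s y) ∧
      (∀ z, descInL z x cs = true → descInL z y cs = true → False))
  | t :: ts, hnd, hw, hmx, hmy, hxy, hyx, hxy2 => by
    rw [descInL_cons, Bool.or_eq_false_iff] at hyx hxy2
    by_cases hxt : mem x t = true
    · by_cases hyt : mem y t = true
      · -- both in the head tree
        have hxts : memL x ts = false := by
          by_contra hc; exact disjL hnd hxt (by simpa using hc)
        have hyts : memL y ts = false := by
          by_contra hc; exact disjL hnd hyt (by simpa using hc)
        obtain ⟨M, hMx, hMy, hne, hl1, hl2, hu⟩ :=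
          master (nodup_of_cons_head hnd) hw.1 hxt hyt hxy hyx.1 hxy2.1
        have hMt : mem M t = true := (descIn_mem hMx).1
        have cardeq : ∀ u v : ℕ, mem u t = true → mem v t = true →
            cardL s u v (t :: ts) = card s u v t := by
          intro u v hu hv
          rw [cardL_cons, if_pos hu, if_pos hv]
        refine Or.inl ⟨M, by simp [descInL_cons, hMx], by simp [descInL_cons, hMy],
          ?_, ?_, ?_, ?_⟩
        · rw [cardeq _ _ hMt hxt, cardeq _ _ hMt hyt]; exact hne
        · rw [cardeq _ _ hMt hxt, cardeq _ _ hMt hyt, cardeq _ _ hyt hxt,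
            cardeq _ _ hxt hyt]; exact hl1
        · rw [cardeq _ _ hMt hxt, cardeq _ _ hMt hyt, cardeq _ _ hyt hxt,
            cardeq _ _ hxt hyt]; exact hl2
        · intro z hzx hzy
          rw [descInL_cons, Bool.or_eq_true] at hzx hzy
          rcases hzx with hzx | hzx
          · rcases hzy with hzy | hzy
            · rcases hu z hzx hzy with h | h
              · exact Or.inl h
              · exact Or.inr (by simp [descInL_cons, h])
            · exact absurd (disjL hnd (descIn_mem hzx).1 (descInL_mem hzy).1) not_false
          · exact absurd (disjL hnd hxt (descInL_mem hzx).2) not_false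
      · -- x in head, y in tail
        have hyt' : mem y t = false := by simpa using hyt
        have hyts : memL y ts = true := by
          rcases memL_split hmy with h | h
          · exact absurd h hyt
          · exact h
        refine Or.inr ⟨?_, ?_, ?_, ?_⟩
        · simp [idxOf_cons, hxt, hyt']
        · intro _
          constructor
          · rw [cardL_cons, if_neg (by simp [hyt']), if_pos hxt]
          · rw [cardL_cons, if_pos hxt, if_neg (by simp [hyt']), if_pos hyts]
        · intro hcon
          rw [idxOf_cons, idxOf_cons, if_pos hxt, if_neg (by simp [hyt'])] at hcon
          omega
        · intro z hzx hzy
          rw [descInL_cons, Bool.or_eq_true] at hzx hzy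
          rcases hzx with hzx | hzx
          · rcases hzy with hzy | hzy
            · exact bool_ff hyt' (descIn_mem hzy).2
            · exact disjL hnd (descIn_mem hzx).1 (descInL_mem hzy).1
          · exact disjL hnd hxt (descInL_mem hzx).2
    · have hxt' : mem x t = false := by simpa using hxt
      have hxts : memL x ts = true := by
        rcases memL_split hmx with h | h
        · exact absurd h hxt
        · exact h
      by_cases hyt : mem y t = true
      · -- y in head, x in tail
        refine Or.inr ⟨?_, ?_, ?_, ?_⟩
        · simp [idxOf_cons, hyt, hxt']
        · intro hcon
          rw [idxOf_cons, idxOf_cons, if_pos hyt, if_neg (by simp [hxt'])] at hcon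
          omega
        · intro _
          constructor
          · rw [cardL_cons, if_neg (by simp [hxt']), if_pos hyt]
          · rw [cardL_cons, if_pos hyt, if_neg (by simp [hxt']), if_pos hxts]
        · intro z hzx hzy
          rw [descInL_cons, Bool.or_eq_true] at hzx hzy
          rcases hzy with hzy | hzy
          · rcases hzx with hzx | hzx
            · exact bool_ff hxt' (descIn_mem hzx).2
            · exact disjL hnd (descIn_mem hzy).1 (descInL_mem hzx).1
          · exact disjL hnd hyt (descInL_mem hzy).2
      · -- both in the tail
        have hyt' : mem y t = false := by simpa using hyt
        have hyts : memL y ts = true := by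
          rcases memL_split hmy with h | h
          · exact absurd h hyt
          · exact h
        have cardeq : ∀ u v : ℕ, mem u t = false → mem v t = false →
            cardL s u v (t :: ts) = cardL s u v ts := by
          intro u v hu hv
          rw [cardL_cons, if_neg (by simp [hu]), if_neg (by simp [hv])]
        rcases masterL (nodup_of_cons_tail hnd) hw.2 hxts hyts hxy hyx.2 hxy2.2 with
          ⟨M, hMx, hMy, hne, hl1, hl2, hu⟩ | ⟨hne, hl1, hl2, hu⟩
        · have hMts : memL M ts = true := (descInL_mem hMx).1
          have hMt : mem M t = false := by
            by_contra hc; exact disjL hnd (by simpa using hc) hMts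
          refine Or.inl ⟨M, by simp [descInL_cons, hMx], by simp [descInL_cons, hMy],
            ?_, ?_, ?_, ?_⟩
          · rw [cardeq _ _ hMt hxt', cardeq _ _ hMt hyt']; exact hne
          · rw [cardeq _ _ hMt hxt', cardeq _ _ hMt hyt', cardeq _ _ hyt' hxt',
              cardeq _ _ hxt' hyt']; exact hl1
          · rw [cardeq _ _ hMt hxt', cardeq _ _ hMt hyt', cardeq _ _ hyt' hxt',
              cardeq _ _ hxt' hyt']; exact hl2
          · intro z hzx hzy
            rw [descInL_cons, Bool.or_eq_true] at hzx hzy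
            rcases hzx with hzx | hzx
            · exact absurd (bool_ff hxt' (descIn_mem hzx).2) (fun h => h)
            · rcases hzy with hzy | hzy
              · exact absurd (bool_ff hyt' (descIn_mem hzy).2) (fun h => h)
              · rcases hu z hzx hzy with h | h
                · exact Or.inl h
                · exact Or.inr (by simp [descInL_cons, h])
        · refine Or.inr ⟨?_, ?_, ?_, ?_⟩
          · simp only [idxOf_cons, if_neg (by simp [hxt'] : ¬ mem x t = true),
              if_neg (by simp [hyt'] : ¬ mem y t = true)]
            omega
          · intro hcon
            simp only [idxOf_cons, hxt', hyt', Bool.false_eq_true, if_false] at hcon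
            have := hl1 (by omega)
            rw [cardeq _ _ hyt' hxt', cardeq _ _ hxt' hyt']
            exact this
          · intro hcon
            simp only [idxOf_cons, hxt', hyt', Bool.false_eq_true, if_false] at hcon
            have := hl2 (by omega)
            rw [cardeq _ _ hxt' hyt', cardeq _ _ hyt' hxt']
            exact this
          · intro z hzx hzy
            rw [descInL_cons, Bool.or_eq_true] at hzx hzy
            rcases hzx with hzx | hzx
            · exact bool_ff hxt' (descIn_mem hzx).2
            · rcases hzy with hzy | hzy
              · exact bool_ff hyt' (descIn_mem hzy).2
              · exact hu z hzx hzy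
end

end STree
open STree in
/-- Characterization of tree-ascents in terms of tree-inversions:
`(a,c)` is a tree-ascent of `T` iff (i) `card(d,c) = card(d,a)` for all
`d > c`; (ii) `card(c,a) < s c`; (iii) for `a < b < c`, `card(c,b) = card(c,a)`
implies `card(b,a) = s b`; (iv) if `s a > 0`, for all `a' < a`,
`card(a,a') = s a` implies `card(c,a') > card(c,a)`. -/
theorem treeAscent_iff_inversions (n : ℕ) (s : ℕ → ℕ) (T : STree)
    (hT : IsSDecreasingTree n s T) (a c : ℕ)
    (ha : 1 ≤ a) (hac : a < c) (hc : c ≤ n) :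
    IsTreeAscent s T a c ↔
      ((∀ d : ℕ, c < d → treeInv n s T d c = treeInv n s T d a) ∧
       treeInv n s T c a < s c ∧
       (∀ b : ℕ, a < b → b < c →
         treeInv n s T c b = treeInv n s T c a → treeInv n s T b a = s b) ∧
       (0 < s a → ∀ a' : ℕ, a' < a →
         treeInv n s T a a' = s a → treeInv n s T c a < treeInv n s T c a')) := by
  obtain ⟨hw, hperm⟩ := hT
  have hnd : (labels T).Nodup :=
    (hperm.nodup_iff).2 (List.nodup_range' (s := 1) (n := n) 1 Nat.one_pos)
  have hmemT : ∀ x, 1 ≤ x → x ≤ n → mem x T = true := by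
    intro x h1 h2
    rw [mem_iff, hperm.mem_iff, List.mem_range'_1]
    omega
  have hrange : ∀ x, mem x T = true → 1 ≤ x ∧ x ≤ n := by
    intro x hx
    rw [mem_iff, hperm.mem_iff, List.mem_range'_1] at hx
    omega
  have hma : mem a T = true := hmemT a ha (by omega)
  have hmc : mem c T = true := hmemT c (by omega) hc
  have tI : ∀ {y x : ℕ}, 1 ≤ x → x < y → y ≤ n → treeInv n s T y x = card s y x T := by
    intro y x h1 h2 h3
    simp only [treeInv]
    rw [if_pos ⟨h1, h2, h3⟩]
  constructor
  · rintro ⟨_, hdesc, hnr, hchain, hre⟩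
    have hcar := card_right hnd hw hdesc
    have hca_lt : card s c a T < s c := by
      rcases Nat.lt_or_ge (card s c a T) (s c) with h | h
      · exact h
      · exact absurd (hcar.2.2 (by omega)) (by simp [hnr])
    refine ⟨?_, ?_, ?_, ?_⟩
    · -- (i)
      intro d hcd
      by_cases hdn : d ≤ n
      · rw [tI (by omega) hcd hdn, tI ha (by omega) hdn]
        exact (card_desc hnd hw hdesc d hcd).symm
      · simp only [treeInv]
        rw [if_neg (fun h => hdn h.2.2), if_neg (fun h => hdn h.2.2)]
    · -- (ii)
      rw [tI ha hac hc]
      exact hca_lt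
    · -- (iii)
      intro b hab hbc hinv
      have h1b : 1 ≤ b := by omega
      have hbn : b ≤ n := by omega
      rw [tI h1b hbc hc, tI ha hac hc] at hinv
      rw [tI ha hab hbn]
      have hmb : mem b T = true := hmemT b h1b hbn
      by_cases hdba : descIn b a T = true
      · exact (card_right hnd hw hdba).2.1 (hchain b hab hbc hdba)
      · have hdba' : descIn b a T = false := by simpa using hdba
        have hdab : descIn a b T = false := by
          by_contra hcon
          have := descIn_lt hw (show descIn a b T = true by simpa using hcon)
          omega
        obtain ⟨M, hMa, hMb, hne, hl1, hl2, hu⟩ :=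
          master hnd hw hma hmb (by omega) hdba' hdab
        rcases Nat.lt_trichotomy (card s M a T) (card s M b T) with hlt1 | heq | hgt1
        · exfalso
          rcases descIn_path hnd hMa hdesc with rfl | hMc | hcM
          · omega
          · -- c is a descendant of M
            have hcMlt : c < M := descIn_lt hw hMc
            have heq2 : card s M a T = card s M c T := card_desc hnd hw hdesc M hcMlt
            have hdcb : descIn c b T = false := by
              by_contra hcon
              have := card_desc hnd hw (show descIn c b T = true by simpa using hcon)
                M hcMlt
              omega
            have hdbc : descIn b c T = false := by
              by_contra hcon
              have := descIn_lt hw (show descIn b c T = true by simpa using hcon)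
              omega
            obtain ⟨M', hM'b, hM'c, hne', hl1', hl2', hu'⟩ :=
              master hnd hw hmb hmc (by omega) hdcb hdbc
            have hM'a : descIn M' a T = true := descIn_trans hnd hM'c hdesc
            have hMeq : M' = M := by
              rcases hu' M hMb hMc with h | h
              · exact h.symm
              · rcases hu M' hM'a hM'b with h' | h'
                · exact h'
                · have := descIn_lt hw h
                  have := descIn_lt hw h'
                  omega
            rw [hMeq] at hl2'
            have := (hl2' (by omega)).2
            omega
          · -- M is a descendant of c : a < M < c
            have h1 : a < M := descIn_lt hw hMa
            have h2 : M < c := descIn_lt hw hcM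
            have h3 : card s M a T = s M := (card_right hnd hw hMa).2.1
              (hchain M h1 h2 hMa)
            have h4 := (card_right hnd hw hMb).1
            omega
        · exact absurd heq hne
        · exact (hl2 hgt1).2
    · -- (iv)
      intro hsa a' ha'a hinv
      have hcond : 1 ≤ a' ∧ a' < a ∧ a ≤ n := by
        by_contra hcon
        simp only [treeInv] at hinv
        rw [if_neg hcon] at hinv
        omega
      obtain ⟨h1a', _, han⟩ := hcond
      rw [tI h1a' ha'a han] at hinv
      rw [tI ha hac hc, tI h1a' (by omega) hc]
      have hma' : mem a' T = true := hmemT a' h1a' (by omega)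
      have hnra' : inRight a a' T = false := rightEmpty_notRight hnd (hre hsa)
      have hdaa' : descIn a a' T = false := by
        by_contra hcon
        have h' : descIn a a' T = true := by simpa using hcon
        exact bool_ff hnra' ((card_right hnd hw h').2.2 hinv)
      have hda'a : descIn a' a T = false := by
        by_contra hcon
        have := descIn_lt hw (show descIn a' a T = true by simpa using hcon)
        omega
      obtain ⟨M, hMa', hMa, hne, hl1, hl2, hu⟩ :=
        master hnd hw hma' hma (by omega) hdaa' hda'a
      have hgt : card s M a T < card s M a' T := by
        rcases Nat.lt_trichotomy (card s M a' T) (card s M a T) with h | h | h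
        · exact absurd (hl1 h).1 (by omega)
        · exact absurd h hne
        · exact h
      rcases descIn_path hnd hMa hdesc with rfl | hMc | hcM
      · exact hgt
      · -- c is a descendant of M
        have hcMlt : c < M := descIn_lt hw hMc
        have heq2 : card s M a T = card s M c T := card_desc hnd hw hdesc M hcMlt
        have hdca' : descIn c a' T = false := by
          by_contra hcon
          have := card_desc hnd hw (show descIn c a' T = true by simpa using hcon)
            M hcMlt
          omega
        have hda'c : descIn a' c T = false := by
          by_contra hcon
          have := descIn_lt hw (show descIn a' c T = true by simpa using hcon)
          omega
        obtain ⟨M', hM'c, hM'a', hne', hl1', hl2', hu'⟩ :=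
          master hnd hw hmc hma' (by omega) hda'c hdca'
        have hM'a : descIn M' a T = true := descIn_trans hnd hM'c hdesc
        have hMeq : M' = M := by
          rcases hu' M hMc hMa' with h | h
          · exact h.symm
          · rcases hu M' hM'a' hM'a with h' | h'
            · exact h'
            · have := descIn_lt hw h
              have := descIn_lt hw h'
              omega
        rw [hMeq] at hl1'
        have := (hl1' (by omega)).2
        omega
      · -- M is a descendant of c : a < M < c
        exfalso
        have h1 : a < M := descIn_lt hw hMa
        have h2 : M < c := descIn_lt hw hcM
        have h3 : card s M a T = s M := (card_right hnd hw hMa).2.1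
          (hchain M h1 h2 hMa)
        have h4 := (card_right hnd hw hMa').1
        omega
  · rintro ⟨h1, h2, h3, h4⟩
    have hdesc : descIn c a T = true := by
      by_contra hcon
      have hdca : descIn c a T = false := by simpa using hcon
      have hdac : descIn a c T = false := by
        by_contra hcon'
        have := descIn_lt hw (show descIn a c T = true by simpa using hcon')
        omega
      obtain ⟨M, hMa, hMc, hne, _, _, _⟩ :=
        master hnd hw hma hmc (by omega) hdca hdac
      have hcM : c < M := descIn_lt hw hMc
      have hMn : M ≤ n := (hrange M (descIn_mem hMc).1).2
      have := h1 M hcM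
      rw [tI (by omega) hcM hMn, tI ha (by omega) hMn] at this
      exact hne (this.symm)
    have hcar := card_right hnd hw hdesc
    rw [tI ha hac hc] at h2
    have hnr : inRight c a T = false := by
      by_contra hcon
      have := hcar.2.1 (by simpa using hcon)
      omega
    refine ⟨hac, hdesc, hnr, ?_, ?_⟩
    · intro b hab hbc hdba
      have h1b : 1 ≤ b := by omega
      have hbn : b ≤ n := by omega
      have heqq : card s c a T = card s c b T := card_desc hnd hw hdba c hbc
      have h3' := h3 b hab hbc
        (by rw [tI h1b hbc hc, tI ha hac hc]; exact heqq.symm)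
      rw [tI ha hab hbn] at h3'
      exact (card_right hnd hw hdba).2.2 h3'
    · intro hsa
      by_contra hcon
      have hreF : rightEmpty a T = false := by simpa using hcon
      obtain ⟨a', hd', hr'⟩ := exists_right hnd hw hma hreF hsa
      have ha'a : a' < a := descIn_lt hw hd'
      have h1a' : 1 ≤ a' := (hrange a' (descIn_mem hd').2).1
      have hcaa' : card s a a' T = s a := (card_right hnd hw hd').2.1 hr'
      have h4' := h4 hsa a' ha'a (by rw [tI h1a' ha'a (by omega)]; exact hcaa')
      have hsame := card_desc hnd hw hd' c (by omega)
      rw [tI ha hac hc, tI h1a' (by omega) hc] at h4'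
      omega
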